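/- arXiv:2211.10209 — 2 statements merged into one kernel-verified Lean document; each statement's English description precedes it below -/
import Mathlib

section
/- Let Ω be a finite probability space, and Ŷ, S : Ω → {0,1} random variables with P(S=0) > 0 and P(S=1) > 0. If Ŷ satisfies demographic parity, i.e. P(Ŷ=0 | S=0) = P(Ŷ=0 | S=1), then for every function b : {0,1} → {0,1}, the balanced accuracy ½(P(b∘Ŷ=0 | S=0) + P(b∘Ŷ=1 | S=1)) equals ½. -/
open scoped Classical
noncomputable section

/-- Probability of an event under weight function `p` on a finite sample space. -/
def Pr {Omega : Type*} [Fintype Omega] (p : Omega → ℝ) (A : Omega → Prop) : ℝ :=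
  ∑ ω, if A ω then p ω else 0

/-- Conditional probability `P(A | B)`. -/
def cPr {Omega : Type*} [Fintype Omega] (p : Omega → ℝ) (A B : Omega → Prop) : ℝ :=
  Pr p (fun ω => A ω ∧ B ω) / Pr p B

lemma Pr_split {Omega : Type*} [Fintype Omega] (p : Omega → ℝ) (Yh : Omega → Fin 2)
    (B : Omega → Prop) :
    Pr p (fun ω => Yh ω = 0 ∧ B ω) + Pr p (fun ω => Yh ω = 1 ∧ B ω) = Pr p B := by
  unfold Pr
  rw [← Finset.sum_add_distrib]
  refine Finset.sum_congr rfl (fun ω _ => ?_)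
  obtain h | h : Yh ω = 0 ∨ Yh ω = 1 := by omega
  all_goals
    simp only [h]
    split_ifs <;> simp_all

lemma cPr_compl {Omega : Type*} [Fintype Omega] (p : Omega → ℝ) (Yh : Omega → Fin 2)
    {B : Omega → Prop} (hB : Pr p B ≠ 0) :
    cPr p (fun ω => Yh ω = 1) B = 1 - cPr p (fun ω => Yh ω = 0) B := by
  unfold cPr
  have := Pr_split p Yh B
  field_simp
  linarith

theorem stmt_1 {Omega : Type*} [Fintype Omega] (p : Omega → ℝ)
    (hp : ∀ ω, 0 ≤ p ω) (hsum : ∑ ω, p ω = 1)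
    (Yh S : Omega → Fin 2)
    (hS0 : 0 < Pr p (fun ω => S ω = 0)) (hS1 : 0 < Pr p (fun ω => S ω = 1))
    (hdp : cPr p (fun ω => Yh ω = 0) (fun ω => S ω = 0)
         = cPr p (fun ω => Yh ω = 0) (fun ω => S ω = 1)) :
    ∀ b : Fin 2 → Fin 2,
      (cPr p (fun ω => b (Yh ω) = 0) (fun ω => S ω = 0)
        + cPr p (fun ω => b (Yh ω) = 1) (fun ω => S ω = 1)) / 2 = 1 / 2 := by
  intro b
  have h0 := hS0.ne'
  have h1 := hS1.ne'
  have keyPr : ∀ (c : Fin 2) (B : Omega → Prop),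
      Pr p (fun ω => b (Yh ω) = c ∧ B ω) =
        (if b 0 = c then 1 else 0) * Pr p (fun ω => Yh ω = 0 ∧ B ω) +
        (if b 1 = c then 1 else 0) * Pr p (fun ω => Yh ω = 1 ∧ B ω) := by
    intro c B
    unfold Pr
    rw [Finset.mul_sum, Finset.mul_sum, ← Finset.sum_add_distrib]
    refine Finset.sum_congr rfl fun ω _ => ?_
    obtain h | h : Yh ω = 0 ∨ Yh ω = 1 := by omega
    all_goals
      simp only [h]
      split_ifs <;> simp_all
  have key : ∀ (c : Fin 2) (B : Omega → Prop),
      cPr p (fun ω => b (Yh ω) = c) B =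
        (if b 0 = c then 1 else 0) * cPr p (fun ω => Yh ω = 0) B +
        (if b 1 = c then 1 else 0) * cPr p (fun ω => Yh ω = 1) B := by
    intro c B
    unfold cPr
    rw [keyPr c B, add_div, mul_div_assoc, mul_div_assoc]
  rw [key 0, key 1, cPr_compl p Yh h0, cPr_compl p Yh h1, hdp]
  obtain hb0 | hb0 : b 0 = 0 ∨ b 0 = 1 := by omega
  all_goals obtain hb1 | hb1 : b 1 = 0 ∨ b 1 = 1 := by omega
  all_goals simp [hb0, hb1]
  all_goals ring
end
end

section
/- Let Ω be a finite probability space with binary random variables Ŷ, Y, S : Ω → {0,1}, with all events (S=s, Y=y) of positive probability, and suppose Ŷ satisfies equalized odds with respect to Y and S. If Y is independent of S, then for every attack function a : {0,1} → {0,1}, the balanced accuracy ½(P(a∘Ŷ=0 | S=0) + P(a∘Ŷ=1 | S=1)) equals ½. -/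
open scoped Classical
noncomputable section

section Aux

variable {Omega : Type*} [Fintype Omega] (p : Omega → ℝ)

lemma Pr_congr {A B : Omega → Prop} (h : ∀ ω, A ω ↔ B ω) : Pr p A = Pr p B := by
  unfold Pr
  refine Finset.sum_congr rfl fun ω _ => ?_
  simp [h ω]

lemma Pr_false : Pr p (fun _ => False) = 0 := by simp [Pr]

lemma fin2_cases (x : Fin 2) : x = 0 ∨ x = 1 := by omega

lemma Pr_split_fin2 (f : Omega → Fin 2) (A : Omega → Prop) :
    Pr p A = Pr p (fun ω => A ω ∧ f ω = 0) + Pr p (fun ω => A ω ∧ f ω = 1) := by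
  unfold Pr
  rw [← Finset.sum_add_distrib]
  refine Finset.sum_congr rfl fun ω _ => ?_
  rcases fin2_cases (f ω) with h | h <;> simp [h]

lemma Pr_comp (a : Fin 2 → Fin 2) (Yh : Omega → Fin 2) (B : Omega → Prop) (c : Fin 2) :
    Pr p (fun ω => a (Yh ω) = c ∧ B ω)
      = (if a 0 = c then Pr p (fun ω => Yh ω = 0 ∧ B ω) else 0)
      + (if a 1 = c then Pr p (fun ω => Yh ω = 1 ∧ B ω) else 0) := by
  rw [Pr_split_fin2 p Yh (fun ω => a (Yh ω) = c ∧ B ω)]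
  congr 1
  · split_ifs with h
    · refine Pr_congr p fun ω => ?_
      constructor
      · rintro ⟨⟨-, hB⟩, h0⟩; exact ⟨h0, hB⟩
      · rintro ⟨h0, hB⟩; exact ⟨⟨by rw [h0, h], hB⟩, h0⟩
    · rw [← Pr_false p]
      refine Pr_congr p fun ω => ?_
      simp only [iff_false]
      rintro ⟨⟨hc, -⟩, h0⟩
      exact h (by rw [← h0, hc])
  · split_ifs with h
    · refine Pr_congr p fun ω => ?_
      constructor
      · rintro ⟨⟨-, hB⟩, h0⟩; exact ⟨h0, hB⟩
      · rintro ⟨h0, hB⟩; exact ⟨⟨by rw [h0, h], hB⟩, h0⟩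
    · rw [← Pr_false p]
      refine Pr_congr p fun ω => ?_
      simp only [iff_false]
      rintro ⟨⟨hc, -⟩, h0⟩
      exact h (by rw [← h0, hc])

lemma cPr_comp (a : Fin 2 → Fin 2) (Yh : Omega → Fin 2) (B : Omega → Prop) (c : Fin 2) :
    cPr p (fun ω => a (Yh ω) = c) B
      = (if a 0 = c then cPr p (fun ω => Yh ω = 0) B else 0)
      + (if a 1 = c then cPr p (fun ω => Yh ω = 1) B else 0) := by
  unfold cPr
  rw [Pr_comp, add_div]
  congr 1 <;> split_ifs <;> simp

end Aux

theorem stmt_10 {Omega : Type*} [Fintype Omega] (p : Omega → ℝ)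
    (hp : ∀ ω, 0 ≤ p ω) (hsum : ∑ ω, p ω = 1)
    (Yh Y S : Omega → Fin 2)
    (hpos : ∀ s y : Fin 2, 0 < Pr p (fun ω => S ω = s ∧ Y ω = y))
    (heo : ∀ yh y : Fin 2,
        cPr p (fun ω => Yh ω = yh) (fun ω => S ω = 0 ∧ Y ω = y)
          = cPr p (fun ω => Yh ω = yh) (fun ω => S ω = 1 ∧ Y ω = y))
    (hind : ∀ y s : Fin 2,
        Pr p (fun ω => Y ω = y ∧ S ω = s)
          = Pr p (fun ω => Y ω = y) * Pr p (fun ω => S ω = s)) :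
    ∀ a : Fin 2 → Fin 2,
      (cPr p (fun ω => a (Yh ω) = 0) (fun ω => S ω = 0)
        + cPr p (fun ω => a (Yh ω) = 1) (fun ω => S ω = 1)) / 2 = 1 / 2 := by
  intro a
  -- positivity of marginals of S
  have hPS : ∀ s : Fin 2, 0 < Pr p (fun ω => S ω = s) := by
    intro s
    rw [Pr_split_fin2 p Y (fun ω => S ω = s)]
    exact add_pos (hpos s 0) (hpos s 1)
  -- equalized odds lifted to a ∘ Yh
  have heo' : ∀ c y : Fin 2,
      cPr p (fun ω => a (Yh ω) = c) (fun ω => S ω = 0 ∧ Y ω = y)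
        = cPr p (fun ω => a (Yh ω) = c) (fun ω => S ω = 1 ∧ Y ω = y) := by
    intro c y
    rw [cPr_comp, cPr_comp, heo 0 y, heo 1 y]
  -- conditional probability decomposition
  have hdec : ∀ (s c : Fin 2),
      cPr p (fun ω => a (Yh ω) = c) (fun ω => S ω = s)
        = cPr p (fun ω => a (Yh ω) = c) (fun ω => S ω = s ∧ Y ω = 0)
            * Pr p (fun ω => Y ω = 0)
          + cPr p (fun ω => a (Yh ω) = c) (fun ω => S ω = s ∧ Y ω = 1)
            * Pr p (fun ω => Y ω = 1) := by
    intro s c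
    have hPSne : Pr p (fun ω => S ω = s) ≠ 0 := (hPS s).ne'
    have hnum : Pr p (fun ω => a (Yh ω) = c ∧ S ω = s)
        = Pr p (fun ω => a (Yh ω) = c ∧ (S ω = s ∧ Y ω = 0))
          + Pr p (fun ω => a (Yh ω) = c ∧ (S ω = s ∧ Y ω = 1)) := by
      rw [Pr_split_fin2 p Y (fun ω => a (Yh ω) = c ∧ S ω = s)]
      congr 1 <;> exact Pr_congr p fun ω => by tauto
    have hBy : ∀ y : Fin 2, Pr p (fun ω => S ω = s ∧ Y ω = y)
        = Pr p (fun ω => Y ω = y) * Pr p (fun ω => S ω = s) := by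
      intro y
      rw [← hind y s]
      exact Pr_congr p fun ω => by tauto
    have hmul : ∀ y : Fin 2,
        Pr p (fun ω => a (Yh ω) = c ∧ (S ω = s ∧ Y ω = y))
          = cPr p (fun ω => a (Yh ω) = c) (fun ω => S ω = s ∧ Y ω = y)
            * (Pr p (fun ω => Y ω = y) * Pr p (fun ω => S ω = s)) := by
      intro y
      rw [← hBy y]
      unfold cPr
      rw [div_mul_cancel₀ _ (hpos s y).ne']
    show (Pr p fun ω => a (Yh ω) = c ∧ S ω = s) / Pr p (fun ω => S ω = s) = _
    rw [hnum, hmul 0, hmul 1]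
    field_simp
  -- the two conditionals agree across S
  have hq : ∀ c : Fin 2,
      cPr p (fun ω => a (Yh ω) = c) (fun ω => S ω = 0)
        = cPr p (fun ω => a (Yh ω) = c) (fun ω => S ω = 1) := by
    intro c
    rw [hdec 0 c, hdec 1 c, heo' c 0, heo' c 1]
  -- the two conditionals for S = 1 sum to one
  have hsum1 : cPr p (fun ω => a (Yh ω) = 0) (fun ω => S ω = 1)
      + cPr p (fun ω => a (Yh ω) = 1) (fun ω => S ω = 1) = 1 := by
    unfold cPr
    rw [← add_div, div_eq_one_iff_eq (hPS 1).ne']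
    rw [Pr_split_fin2 p (fun ω => a (Yh ω)) (fun ω => S ω = 1)]
    ring_nf
    congr 1 <;> exact Pr_congr p fun ω => by tauto
  rw [hq 0, hsum1]
end
end
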